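/- Let L be a relational first-order language and let U be a countably infinite ultrahomogeneous L-structure with the pigeonhole property. Let a₁, …, aₙ, b be distinct elements of U and let g be a partial isomorphism with domain {a₁, …, aₙ}. Then the set S = {x ∈ U : x ∉ range(g) and the map extending g by b ↦ x is a partial isomorphism}, equipped with the induced L-structure, is isomorphic to U; in particular S is infinite. -/

import Mathlib

open FirstOrder

/-- `U` has the pigeonhole property: for every subset `S`, the induced structure on `S`
or on its complement is isomorphic to `U`; for a relational language this is expressed
by the existence of a self-embedding with range `S` (resp. `Sᶜ`). -/
def HasPigeonhole (L : Language) (U : Type*) [L.Structure U] : Prop :=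
  ∀ S : Set U, (∃ f : U ↪[L] U, Set.range f = S) ∨ (∃ f : U ↪[L] U, Set.range f = Sᶜ)

/-- `f` is a partial isomorphism with domain the (distinct) elements enumerated by `a`:
the map `a i ↦ f i` is well-defined, injective, and preserves all relations. -/
def IsPartialIso (L : Language) {U : Type*} [L.Structure U] {n : ℕ}
    (a f : Fin n → U) : Prop :=
  Function.Injective f ∧
    ∀ (k : ℕ) (R : L.Relations k) (t : Fin k → Fin n),
      Language.Structure.RelMap R (a ∘ t) ↔ Language.Structure.RelMap R (f ∘ t)

lemma exists_auto {L : Language} [L.IsRelational] {U : Type*} [L.Structure U]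
    (hU : L.IsUltrahomogeneous U) {n : ℕ} {a f : Fin n → U}
    (ha : Function.Injective a) (hf : IsPartialIso L a f) :
    ∃ σ : U ≃[L] U, ∀ i, σ (a i) = f i := by
  set S := Language.Substructure.closure L (Set.range a) with hS
  have hmem : ∀ i, a i ∈ S := fun i => Language.Substructure.subset_closure ⟨i, rfl⟩
  have hidx : ∀ x : S, ∃ i, a i = (x : U) := fun x =>
    (Language.Substructure.mem_closure_iff_of_isRelational L (Set.range a) x).1 x.2
  choose idx hidx using hidx
  let e : S ↪[L] U := by
    refine ⟨⟨fun x => f (idx x), ?_⟩, ?_, ?_⟩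
    · intro x y hxy
      have := hf.1 hxy
      apply Subtype.ext
      rw [← hidx x, ← hidx y, this]
    · intro k g x
      exact isEmptyElim g
    · intro k R t
      have h1 : (fun x : S => f (idx x)) ∘ t = f ∘ (idx ∘ t) := rfl
      have h2 : a ∘ (idx ∘ t) = fun i => ((t i : U)) := by
        funext i; exact hidx (t i)
      rw [h1, ← hf.2 k R (idx ∘ t), h2]
      rfl
  obtain ⟨σ, hσ⟩ := hU S (Language.Substructure.fg_closure (Set.finite_range a)) e
  refine ⟨σ, fun i => ?_⟩
  have h1 := congr_fun (congr_arg DFunLike.coe hσ) ⟨a i, hmem i⟩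
  simp only [Language.Embedding.comp_apply, Language.Substructure.coe_subtype] at h1
  have h2 : e ⟨a i, hmem i⟩ = f (idx ⟨a i, hmem i⟩) := rfl
  have h3 : idx ⟨a i, hmem i⟩ = i := ha (hidx ⟨a i, hmem i⟩)
  rw [h2, h3] at h1
  simpa using h1.symm


theorem extension_set_isomorphic_to_U {L : Language} [L.IsRelational]
    {U : Type*} [L.Structure U] [Countable U] [Infinite U]
    (hU : L.IsUltrahomogeneous U) (hP : HasPigeonhole L U)
    {n : ℕ} (a : Fin n → U) (b : U)
    (hab : Function.Injective (Fin.snoc a b : Fin (n + 1) → U))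
    (f : Fin n → U) (hf : IsPartialIso L a f) :
    (∃ h : U ↪[L] U, Set.range h =
        {x : U | x ∉ Set.range f ∧
          IsPartialIso L (Fin.snoc a b) (Fin.snoc f x)}) ∧
      {x : U | x ∉ Set.range f ∧
        IsPartialIso L (Fin.snoc a b) (Fin.snoc f x)}.Infinite := by
  set T := {x : U | x ∉ Set.range f ∧
      IsPartialIso L (Fin.snoc a b) (Fin.snoc f x)} with hT
  have ha : Function.Injective a := by
    intro i j hij
    have h1 : (Fin.snoc a b : Fin (n+1) → U) i.castSucc
        = (Fin.snoc a b : Fin (n+1) → U) j.castSucc := by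
      simpa using hij
    simpa using hab h1
  have hbne : ∀ i, b ≠ a i := by
    intro i hb
    have h1 : (Fin.snoc a b : Fin (n+1) → U) (Fin.last n)
        = (Fin.snoc a b : Fin (n+1) → U) i.castSucc := by
      simpa using hb
    have := hab h1
    exact absurd this.symm (Fin.castSucc_lt_last i).ne
  have hsnocinj : ∀ {x : U}, x ∉ Set.range f →
      Function.Injective (Fin.snoc f x : Fin (n+1) → U) := by
    intro x hx i j hij
    rcases Fin.eq_castSucc_or_eq_last i with ⟨i', rfl⟩ | rfl <;>
      rcases Fin.eq_castSucc_or_eq_last j with ⟨j', rfl⟩ | rfl <;>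
      simp only [Fin.snoc_castSucc, Fin.snoc_last] at hij ⊢
    · exact congrArg _ (hf.1 hij)
    · exact absurd ⟨i', hij⟩ hx
    · exact absurd ⟨j', hij.symm⟩ hx
  have key : ∀ h : U ↪[L] U, Set.range h ≠ Tᶜ := by
    intro h hrange
    have hfmem : ∀ i, f i ∈ Set.range h := by
      intro i
      rw [hrange]
      intro hmem
      exact hmem.1 ⟨i, rfl⟩
    choose c hc using hfmem
    have hcinj : Function.Injective c := by
      intro i j hij
      exact hf.1 (by rw [← hc i, ← hc j, hij])
    have hcrel : IsPartialIso L a c := by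
      refine ⟨hcinj, fun k R t => ?_⟩
      have h1 : f ∘ t = h ∘ (c ∘ t) := by funext j; exact (hc (t j)).symm
      rw [hf.2 k R t, h1]
      exact h.map_rel R (c ∘ t)
    obtain ⟨σ, hσ⟩ := exists_auto hU ha hcrel
    set x := h (σ b) with hx
    have hxnr : x ∉ Set.range f := by
      rintro ⟨i, hi⟩
      rw [← hc i] at hi
      have h1 : σ b = c i := h.injective hi.symm
      rw [← hσ i] at h1
      exact hbne i (σ.injective h1)
    have hxT : x ∈ T := by
      refine ⟨hxnr, hsnocinj hxnr, fun k R t => ?_⟩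
      have hcomp : (Fin.snoc f x : Fin (n+1) → U) ∘ t
          = h ∘ (σ ∘ ((Fin.snoc a b : Fin (n+1) → U) ∘ t)) := by
        funext j
        rcases Fin.eq_castSucc_or_eq_last (t j) with ⟨i', hi'⟩ | hl
        · simp only [Function.comp_apply, hi', Fin.snoc_castSucc]
          rw [hσ i', hc i']
        · simp only [Function.comp_apply, hl, Fin.snoc_last]
          exact hx
      rw [hcomp, h.map_rel, σ.map_rel]
    have hxTc : x ∈ Tᶜ := by rw [← hrange]; exact ⟨σ b, rfl⟩
    exact hxTc hxT
  rcases hP T with ⟨h, hh⟩ | ⟨h, hh⟩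
  · exact ⟨⟨h, hh⟩, hh ▸ Set.infinite_range_of_injective h.injective⟩
  · exact absurd hh (key h)
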